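/- Let k, n ≥ 1 and let a₁,...,a_k be non-negative integers with Σᵢ aᵢ = n and Σᵢ (2^{aᵢ} − 1) ≤ 2^k − 1. Then k ≥ √n, and moreover k ≥ √n + (1/4)·log₂ n − 1/2. -/
import Mathlib

open Finset Real

lemma jensen_aux (k : ℕ) (hk : 1 ≤ k) (a : Fin k → ℕ) :
    (k : ℝ) * (2 : ℝ) ^ ((∑ i, (a i : ℝ)) / k) ≤ ∑ i, (2 : ℝ) ^ (a i : ℝ) := by
  have hk0 : (0:ℝ) < k := by positivity
  have h := Real.geom_mean_le_arith_mean_weighted Finset.univ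
      (fun _ : Fin k => 1 / (k:ℝ)) (fun i => (2:ℝ) ^ (a i : ℝ))
      (fun i _ => by positivity)
      (by simp; field_simp)
      (fun i _ => by positivity)
  have hL : (∏ i : Fin k, ((2:ℝ) ^ (a i : ℝ)) ^ (1 / (k:ℝ)))
      = (2:ℝ) ^ ((∑ i, (a i : ℝ)) / k) := by
    rw [Finset.sum_div, Real.rpow_sum_of_pos (by norm_num : (0:ℝ) < 2)]
    refine Finset.prod_congr rfl fun i _ => ?_
    rw [← Real.rpow_mul (by norm_num : (0:ℝ) ≤ 2)]
    ring_nf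
  have hR : (∑ i : Fin k, (1 / (k:ℝ)) * (2:ℝ) ^ (a i : ℝ))
      = (∑ i, (2:ℝ) ^ (a i : ℝ)) / k := by
    rw [Finset.sum_div]
    refine Finset.sum_congr rfl fun i _ => ?_
    ring
  rw [hL, hR] at h
  rw [mul_comm, ← le_div_iff₀ hk0]
  exact h

/-- Let `k, n ≥ 1` and `a₁,…,a_k` be non-negative integers with `Σ aᵢ = n` and
`Σ (2^{aᵢ} − 1) ≤ 2^k − 1`. Then `k ≥ √n` and moreover `k ≥ √n + (1/4)·log₂ n − 1/2`. -/
theorem k_lower_bound (k n : ℕ) (hk : 1 ≤ k) (hn : 1 ≤ n) (a : Fin k → ℕ)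
    (hsum : ∑ i, a i = n) (hle : ∑ i, (2 ^ a i - 1) ≤ 2 ^ k - 1) :
    Real.sqrt n ≤ (k : ℝ) ∧
      Real.sqrt n + (1 / 4) * Real.logb 2 n - 1 / 2 ≤ (k : ℝ) := by
  have hN1 : (1:ℝ) ≤ (n:ℝ) := by exact_mod_cast hn
  have hN0 : (0:ℝ) < (n:ℝ) := by linarith
  by_cases hnk : n < k
  · -- small n case: k ≥ n + 1
    have hK : (n:ℝ) + 1 ≤ (k:ℝ) := by exact_mod_cast hnk
    have hs1 : (1:ℝ) ≤ Real.sqrt n := by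
      rw [show (1:ℝ) = Real.sqrt 1 by simp]
      exact Real.sqrt_le_sqrt hN1
    have hsq : Real.sqrt n ^ 2 = (n:ℝ) := Real.sq_sqrt hN0.le
    have hlog : Real.logb 2 n ≤ 4 * (Real.sqrt n - 1) := by
      have h1 : Real.log (Real.sqrt n) ≤ Real.sqrt n - 1 :=
        Real.log_le_sub_one_of_pos (by linarith)
      have h2 : Real.log n = 2 * Real.log (Real.sqrt n) := by
        rw [Real.log_sqrt hN0.le]; ring
      have h3 : (1:ℝ)/2 ≤ Real.log 2 := by
        have := Real.log_two_gt_d9; linarith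
      rw [Real.logb, div_le_iff₀ (by linarith : (0:ℝ) < Real.log 2)]
      nlinarith [Real.sqrt_nonneg (n:ℝ)]
    constructor
    · nlinarith
    · nlinarith
  · push_neg at hnk
    -- key inequality from Jensen
    have hsum2 : ∑ i, 2 ^ a i ≤ 2 ^ k - 1 + k := by
      have : ∑ i : Fin k, 2 ^ a i = ∑ i : Fin k, ((2 ^ a i - 1) + 1) := by
        refine Finset.sum_congr rfl fun i _ => ?_
        have : 1 ≤ 2 ^ a i := Nat.one_le_two_pow
        omega
      rw [this, Finset.sum_add_distrib] at *
      simp only [Finset.sum_const, Finset.card_univ, Fintype.card_fin, smul_eq_mul, mul_one]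
      omega
    have hcast : (∑ i, (2:ℝ) ^ (a i : ℝ)) ≤ (2:ℝ) ^ (k:ℝ) - 1 + k := by
      have h1 : ((∑ i, 2 ^ a i : ℕ) : ℝ) ≤ ((2 ^ k - 1 + k : ℕ) : ℝ) := by
        exact_mod_cast hsum2
      have h2 : ((2 ^ k - 1 + k : ℕ) : ℝ) = (2:ℝ) ^ (k:ℝ) - 1 + k := by
        have : 1 ≤ 2 ^ k := Nat.one_le_two_pow
        push_cast [this]
        rw [Real.rpow_natCast]
      rw [h2] at h1
      refine le_trans (le_of_eq ?_) h1
      push_cast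
      refine Finset.sum_congr rfl fun i _ => ?_
      rw [Real.rpow_natCast]
    have hjen := jensen_aux k hk a
    have hsumcast : (∑ i, (a i : ℝ)) = (n:ℝ) := by exact_mod_cast hsum
    rw [hsumcast] at hjen
    have key : (k:ℝ) * (2:ℝ) ^ ((n:ℝ)/(k:ℝ)) ≤ (2:ℝ) ^ (k:ℝ) - 1 + k :=
      le_trans hjen hcast
    by_cases hk1 : k = 1
    · subst hk1
      have h0 : a 0 = n := by rw [← hsum]; simp
      have h1 : 2 ^ a 0 - 1 ≤ 1 := by
        have := hle
        simp [Fin.sum_univ_one] at this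
        omega
      have h2 : 2 ^ n ≤ 2 ^ 1 := by
        have : 1 ≤ 2 ^ a 0 := Nat.one_le_two_pow
        rw [← h0]; omega
      have h3 : n = 1 := by
        have := (Nat.pow_le_pow_iff_right (by norm_num : 1 < 2)).mp h2
        omega
      subst h3
      norm_num
    · -- main case: 2 ≤ k ≤ n
      have hk2 : 2 ≤ k := by omega
      have hK2 : (2:ℝ) ≤ (k:ℝ) := by exact_mod_cast hk2
      have hK0 : (0:ℝ) < (k:ℝ) := by linarith
      have hKN : (k:ℝ) ≤ (n:ℝ) := by exact_mod_cast hnk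
      set K := (k:ℝ)
      set N := (n:ℝ)
      set x := N / K with hx
      have hx1 : 1 ≤ x := (one_le_div hK0).mpr hKN
      -- 2^(x-1) ≤ 2^x - 1
      have hsplit : (2:ℝ) ^ x = (2:ℝ) ^ (x - 1) * 2 := by
        rw [← Real.rpow_add_one (by norm_num : (2:ℝ) ≠ 0)]
        ring_nf
      have hone : (1:ℝ) ≤ (2:ℝ) ^ (x - 1) := by
        rw [show (1:ℝ) = (2:ℝ) ^ (0:ℝ) by simp]
        exact Real.rpow_le_rpow_left_iff (by norm_num : (1:ℝ) < 2) |>.mpr (by linarith)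
      have h1 : K * (2:ℝ) ^ (x - 1) ≤ (2:ℝ) ^ K := by nlinarith
      -- take logb 2
      have hpos : (0:ℝ) < K * (2:ℝ) ^ (x - 1) := by positivity
      have hlr : ∀ y : ℝ, Real.logb 2 ((2:ℝ) ^ y) = y := fun y =>
        Real.logb_rpow (by norm_num : (0:ℝ) < 2) (by norm_num : (2:ℝ) ≠ 1)
      have h2 : Real.logb 2 (K * (2:ℝ) ^ (x - 1)) ≤ K := by
        have := Real.logb_le_logb_of_le (by norm_num : (1:ℝ) < 2) hpos h1
        rwa [hlr K] at this
      have h3 : Real.logb 2 K + (x - 1) ≤ K := by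
        rw [Real.logb_mul (by positivity) (by positivity), hlr] at h2
        linarith
      have hlogK1 : 1 ≤ Real.logb 2 K := by
        rw [show (1:ℝ) = Real.logb 2 2 by simp]
        exact Real.logb_le_logb_of_le (by norm_num) (by norm_num) hK2
      -- N ≤ K^2 + K*(1 - logb 2 K)
      have hNle : N ≤ K^2 + K * (1 - Real.logb 2 K) := by
        have hxle : x ≤ K + 1 - Real.logb 2 K := by linarith
        have h7 : x * K ≤ (K + 1 - Real.logb 2 K) * K :=
          mul_le_mul_of_nonneg_right hxle hK0.le
        rw [hx, div_mul_cancel₀ N hK0.ne'] at h7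
        calc N ≤ (K + 1 - Real.logb 2 K) * K := h7
        _ = K^2 + K * (1 - Real.logb 2 K) := by ring
      have hNK2 : N ≤ K^2 := by nlinarith
      have hsqK : Real.sqrt N ≤ K := by
        calc Real.sqrt N ≤ Real.sqrt (K^2) := Real.sqrt_le_sqrt hNK2
        _ = K := Real.sqrt_sq hK0.le
      refine ⟨hsqK, ?_⟩
      -- sqrt N ≤ K + (1 - logb 2 K)/2
      have hlogK2 : Real.logb 2 K ≤ 2 * K := by
        have h5 : Real.log K ≤ K - 1 := Real.log_le_sub_one_of_pos hK0
        have h6 : (1:ℝ)/2 ≤ Real.log 2 := by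
          have := Real.log_two_gt_d9; linarith
        rw [Real.logb, div_le_iff₀ (by linarith : (0:ℝ) < Real.log 2)]
        nlinarith
      have ht0 : (0:ℝ) ≤ K + (1 - Real.logb 2 K) / 2 := by linarith
      have hsqt : Real.sqrt N ≤ K + (1 - Real.logb 2 K) / 2 := by
        have hexp : (K + (1 - Real.logb 2 K) / 2)^2
            = K^2 + K*(1 - Real.logb 2 K) + ((1 - Real.logb 2 K)/2)^2 := by ring
        have hN2 : N ≤ (K + (1 - Real.logb 2 K) / 2)^2 := by
          have := sq_nonneg ((1 - Real.logb 2 K)/2)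
          linarith
        calc Real.sqrt N ≤ Real.sqrt ((K + (1 - Real.logb 2 K) / 2)^2) :=
            Real.sqrt_le_sqrt hN2
        _ = _ := Real.sqrt_sq ht0
      have hlogN : Real.logb 2 N ≤ 2 * Real.logb 2 K := by
        calc Real.logb 2 N ≤ Real.logb 2 (K^2) :=
            Real.logb_le_logb_of_le (by norm_num) hN0 hNK2
        _ = 2 * Real.logb 2 K := by rw [Real.logb_pow]; norm_num
      linarith
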